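/- arXiv:1702.00787 — 4 statements merged into one kernel-verified Lean document; each statement's English description precedes it below -/
import Mathlib

section
/- For every real W ≥ 2 there is an instance of the multiple knapsack problem on which the simple greedy algorithm (highest ratio item to largest-capacity knapsack) achieves total profit whose ratio to the optimum profit equals 2/W; hence the simple greedy algorithm has no constant-factor approximation guarantee. -/
/-- Index (smallest, by convention) of a knapsack with maximal remaining
capacity among those in which an item of weight `w` fits, if any. -/
noncomputable def pick {n : ℕ} (r : Fin n → ℝ) (w : ℝ) : Option (Fin n) :=
  (List.finRange n).find? (fun j => decide (w ≤ r j ∧ ∀ j' : Fin n, w ≤ r j' → r j' ≤ r j))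

/-- Total profit of the simple greedy algorithm: items are processed in order
(assumed sorted by nonincreasing ratio), each assigned to the knapsack of
largest remaining capacity in which it fits, if any. -/
noncomputable def greedyProfit {n : ℕ} : List (ℝ × ℝ) → (Fin n → ℝ) → ℝ
  | [], _ => 0
  | (c, w) :: rest, r =>
    match pick r w with
    | none => greedyProfit rest r
    | some j => c + greedyProfit rest (Function.update r j (r j - w))

/-- The per-item assignment produced by the simple greedy algorithm. -/
noncomputable def greedyAssign {n : ℕ} : List (ℝ × ℝ) → (Fin n → ℝ) → List (Option (Fin n))
  | [], _ => []
  | (_, w) :: rest, r =>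
    match pick r w with
    | none => none :: greedyAssign rest r
    | some j => some j :: greedyAssign rest (Function.update r j (r j - w))

/-- A feasible assignment of items to knapsacks: the total weight in each
knapsack does not exceed its capacity (each item goes to at most one knapsack
since the assignment is a function). -/
def FeasibleAssign {n : ℕ} (W : Fin n → ℝ) (items : List (ℝ × ℝ))
    (a : Fin items.length → Option (Fin n)) : Prop :=
  ∀ j : Fin n, ∑ i ∈ Finset.univ.filter (fun i => a i = some j), (items.get i).2 ≤ W j

/-- Total profit of an assignment: sum of costs of assigned items. -/
def assignProfit {n : ℕ} (items : List (ℝ × ℝ)) (a : Fin items.length → Option (Fin n)) : ℝ :=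
  ∑ i ∈ Finset.univ.filter (fun i => a i ≠ none), (items.get i).1

/-- Items sorted in nonincreasing order of cost/weight ratio. -/
def SortedByRatio (items : List (ℝ × ℝ)) : Prop :=
  items.Pairwise (fun p q => q.1 / q.2 ≤ p.1 / p.2)

lemma key (W : ℝ) (hW : 2 ≤ W) :
    greedyProfit [(2,1),(W,W)] (fun _ : Fin 1 => W) = 2 ∧
    IsGreatest {v : ℝ | ∃ a : Fin ([(2,1),(W,W)] : List (ℝ × ℝ)).length → Option (Fin 1),
      FeasibleAssign (fun _ => W) [(2,1),(W,W)] a ∧ assignProfit [(2,1),(W,W)] a = v} W := by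
  have hp1 : pick (fun _ : Fin 1 => W) 1 = some 0 := by
    unfold pick
    rw [show List.finRange 1 = [0] from rfl, List.find?_cons_of_pos]
    simp only [decide_eq_true_eq]
    exact ⟨by linarith, fun j' _ => le_refl _⟩
  have hp2 : pick (Function.update (fun _ : Fin 1 => W) 0 (W - 1)) W = none := by
    unfold pick
    rw [show List.finRange 1 = [0] from rfl, List.find?_cons_of_neg, List.find?_nil]
    simp only [decide_eq_true_eq, not_and]
    intro h
    simp [Function.update] at h
    linarith
  constructor
  · have step1 : greedyProfit [(2,1),(W,W)] (fun _ : Fin 1 => W)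
        = 2 + greedyProfit [(W,W)] (Function.update (fun _ : Fin 1 => W) 0 (W - 1)) := by
      conv_lhs => rw [greedyProfit]
      rw [hp1]
    have step2 : greedyProfit [(W,W)] (Function.update (fun _ : Fin 1 => W) 0 (W - 1)) = 0 := by
      conv_lhs => rw [greedyProfit]
      rw [hp2]
      rw [greedyProfit]
    rw [step1, step2]; ring
  · constructor
    · refine ⟨![none, some 0], ?_, ?_⟩
      · intro j
        have hj : j = 0 := Subsingleton.elim _ _
        subst hj
        show (∑ i ∈ Finset.univ.filter (fun i : Fin 2 => ![none, some 0] i = some 0),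
          (([(2,1),(W,W)] : List (ℝ × ℝ)).get i).2) ≤ W
        rw [Finset.sum_filter, Fin.sum_univ_two]
        simp
      · show (∑ i ∈ Finset.univ.filter (fun i : Fin 2 => ![none, some 0] i ≠ none),
          (([(2,1),(W,W)] : List (ℝ × ℝ)).get i).1) = W
        rw [Finset.sum_filter, Fin.sum_univ_two]
        simp
    · rintro v ⟨a, hfeas, rfl⟩
      have hf := hfeas 0
      rw [show (∑ i ∈ Finset.univ.filter (fun i => a i = some 0),
          (([(2,1),(W,W)] : List (ℝ × ℝ)).get i).2)
          = ∑ i : Fin 2, if a i = some 0 then (([(2,1),(W,W)] : List (ℝ × ℝ)).get i).2 else 0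
          from Finset.sum_filter _ _, Fin.sum_univ_two] at hf
      show (∑ i ∈ Finset.univ.filter (fun i => a i ≠ none),
          (([(2,1),(W,W)] : List (ℝ × ℝ)).get i).1) ≤ W
      rw [show (∑ i ∈ Finset.univ.filter (fun i => a i ≠ none),
          (([(2,1),(W,W)] : List (ℝ × ℝ)).get i).1)
          = ∑ i : Fin 2, if a i ≠ none then (([(2,1),(W,W)] : List (ℝ × ℝ)).get i).1 else 0
          from Finset.sum_filter _ _, Fin.sum_univ_two]
      have h0 : a (0 : Fin 2) = none ∨ a (0 : Fin 2) = some 0 := by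
        rcases ha : a (0 : Fin 2) with _ | j
        · exact Or.inl rfl
        · exact Or.inr (by rw [Subsingleton.elim j 0])
      have h1 : a (1 : Fin 2) = none ∨ a (1 : Fin 2) = some 0 := by
        rcases ha : a (1 : Fin 2) with _ | j
        · exact Or.inl rfl
        · exact Or.inr (by rw [Subsingleton.elim j 0])
      rcases h0 with h0 | h0 <;> rcases h1 with h1 | h1 <;>
        simp [h0, h1] at hf ⊢ <;> linarith

lemma instance_for (W : ℝ) (hW : 2 ≤ W) :
    ∃ (n : ℕ), 0 < n ∧ ∃ (items : List (ℝ × ℝ)) (cap : Fin n → ℝ) (opt : ℝ),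
        SortedByRatio items ∧
        IsGreatest {v : ℝ | ∃ a : Fin items.length → Option (Fin n),
          FeasibleAssign cap items a ∧ assignProfit items a = v} opt ∧
        0 < opt ∧ greedyProfit items cap = 2 ∧ opt = W := by
  obtain ⟨hg, hopt⟩ := key W hW
  refine ⟨1, one_pos, [(2,1),(W,W)], (fun _ => W), W, ?_, hopt, by linarith, hg, rfl⟩
  refine List.Pairwise.cons ?_ (List.pairwise_singleton _ _)
  rintro p hp
  simp at hp
  subst hp
  rw [div_self (by linarith : W ≠ 0)]
  norm_num

/-- For every `W ≥ 2` there is an instance on which the simple greedy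
algorithm achieves exactly a `2 / W` fraction of the optimum profit; hence
for every `ρ > 0` there is an instance on which greedy gets less than
`ρ` times the optimum, i.e. no constant-factor guarantee holds. -/
theorem stmt1 :
    (∀ W : ℝ, 2 ≤ W →
      ∃ (n : ℕ), 0 < n ∧ ∃ (items : List (ℝ × ℝ)) (cap : Fin n → ℝ) (opt : ℝ),
        SortedByRatio items ∧
        IsGreatest {v : ℝ | ∃ a : Fin items.length → Option (Fin n),
          FeasibleAssign cap items a ∧ assignProfit items a = v} opt ∧
        0 < opt ∧
        greedyProfit items cap / opt = 2 / W) ∧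
    (∀ ρ : ℝ, 0 < ρ →
      ∃ (n : ℕ), 0 < n ∧ ∃ (items : List (ℝ × ℝ)) (cap : Fin n → ℝ) (opt : ℝ),
        SortedByRatio items ∧
        IsGreatest {v : ℝ | ∃ a : Fin items.length → Option (Fin n),
          FeasibleAssign cap items a ∧ assignProfit items a = v} opt ∧
        0 < opt ∧
        greedyProfit items cap < ρ * opt) := by
  constructor
  · intro W hW
    obtain ⟨n, hn, items, cap, opt, hs, ho, hpos, hg, hoW⟩ := instance_for W hW
    exact ⟨n, hn, items, cap, opt, hs, ho, hpos, by rw [hg, hoW]⟩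
  · intro ρ hρ
    set W := max 2 (3/ρ) with hWdef
    have hW2 : (2:ℝ) ≤ W := le_max_left _ _
    obtain ⟨n, hn, items, cap, opt, hs, ho, hpos, hg, hoW⟩ := instance_for W hW2
    refine ⟨n, hn, items, cap, opt, hs, ho, hpos, ?_⟩
    rw [hg, hoW]
    have : 3 / ρ ≤ W := le_max_right _ _
    have h3 : 3 ≤ ρ * W := by
      rw [div_le_iff₀ hρ] at this
      linarith [mul_comm W ρ]
    linarith
end

section
/- In the instance with n knapsacks of capacity W ≥ 2, n items with (cost, weight) = (2,1), and n items with (cost, weight) = (W, W), the optimal solution of the multiple knapsack problem has total profit at least nW (achieved by placing one (W,W)-item in each knapsack), while the greedy-by-ratio solution that places the (2,1)-items first achieves profit 2n. -/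
section helpers

lemma find?_finRange_eq_some {n : ℕ} (p : Fin n → Bool) (k : Fin n)
    (hk : p k = true) (hlt : ∀ j : Fin n, (j : ℕ) < (k : ℕ) → p j = false) :
    (List.finRange n).find? p = some k := by
  have hklen : (k : ℕ) < (List.finRange n).length := by simp [k.isLt]
  rw [← List.take_append_drop (k : ℕ) (List.finRange n), List.find?_append]
  have h1 : ((List.finRange n).take (k : ℕ)).find? p = none := by
    rw [List.find?_eq_none]
    intro x hx
    obtain ⟨i, hi, hix⟩ := List.mem_take_iff_getElem.mp hx
    have hxi : (x : ℕ) = i := by rw [← hix]; simp [List.getElem_finRange]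
    simp [hlt x (by omega)]
  have h2 : ((List.finRange n).drop (k : ℕ)).find? p = some k := by
    rw [List.drop_eq_getElem_cons hklen]
    have : (List.finRange n)[(k : ℕ)] = k := by
      simp [List.getElem_finRange]
    rw [this, List.find?_cons_of_pos hk]
  rw [h1, h2]; rfl

lemma pick_eq_none {n : ℕ} (r : Fin n → ℝ) (w : ℝ) (h : ∀ j : Fin n, ¬ w ≤ r j) :
    pick r w = none := by
  unfold pick
  rw [List.find?_eq_none]
  intro x _
  simp only [decide_eq_true_eq, not_and]
  intro hw
  exact absurd hw (h x)

lemma pick_eq_some {n : ℕ} (r : Fin n → ℝ) (w : ℝ) (k : Fin n)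
    (hk : w ≤ r k ∧ ∀ j' : Fin n, w ≤ r j' → r j' ≤ r k)
    (hlt : ∀ j : Fin n, (j : ℕ) < (k : ℕ) →
      ¬ (w ≤ r j ∧ ∀ j' : Fin n, w ≤ r j' → r j' ≤ r j)) :
    pick r w = some k := by
  unfold pick
  exact find?_finRange_eq_some _ k (by simpa using hk) (fun j hj => by simpa using hlt j hj)

lemma greedy_heavy {n : ℕ} (W : ℝ) : ∀ (m : ℕ) (r : Fin n → ℝ), (∀ j, ¬ W ≤ r j) →
    greedyProfit (List.replicate m (W, W)) r = 0 := by
  intro m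
  induction m with
  | zero => intro r _; simp [greedyProfit]
  | succ m ih =>
    intro r hr
    rw [List.replicate_succ]
    unfold greedyProfit
    rw [pick_eq_none r W hr]
    exact ih r hr

lemma greedy_light (n : ℕ) (W : ℝ) (hW : 2 ≤ W) :
    ∀ (m k : ℕ) (hkm : k + m = n),
    greedyProfit (List.replicate m ((2:ℝ), (1:ℝ)) ++ List.replicate n (W, W))
      (fun j : Fin n => if (j : ℕ) < k then W - 1 else W) = 2 * m := by
  intro m
  induction m with
  | zero =>
    intro k hkm
    have hk : k = n := by omega
    subst hk
    simp only [List.replicate_zero, List.nil_append, Nat.cast_zero, mul_zero]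
    apply greedy_heavy
    intro j
    rw [if_pos j.isLt]
    linarith
  | succ m ih =>
    intro k hkm
    have hkn : k < n := by omega
    set r : Fin n → ℝ := fun j : Fin n => if (j : ℕ) < k then W - 1 else W with hr
    rw [List.replicate_succ, List.cons_append]
    unfold greedyProfit
    have hrk : r ⟨k, hkn⟩ = W := by simp [hr]
    have hpick : pick r 1 = some ⟨k, hkn⟩ := by
      apply pick_eq_some
      · constructor
        · rw [hrk]; linarith
        · intro j' _
          rw [hrk]
          by_cases h : (j' : ℕ) < k <;> simp [hr, h] <;> linarith
      · intro j hj hP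
        have h1 : r j = W - 1 := by simp [hr, hj]
        have h2 : (1 : ℝ) ≤ r ⟨k, hkn⟩ := by rw [hrk]; linarith
        have := hP.2 ⟨k, hkn⟩ h2
        rw [hrk, h1] at this
        linarith
    rw [hpick]
    show (2:ℝ) + greedyProfit (List.replicate m ((2:ℝ),(1:ℝ)) ++ List.replicate n (W,W))
        (Function.update r ⟨k, hkn⟩ (r ⟨k, hkn⟩ - 1)) = 2 * ((m + 1 : ℕ) : ℝ)
    have hupd : Function.update r ⟨k, hkn⟩ (r ⟨k, hkn⟩ - 1)
        = fun j : Fin n => if (j : ℕ) < k + 1 then W - 1 else W := by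
      funext j
      by_cases h : j = ⟨k, hkn⟩
      · subst h; simp [hrk]
      · have hjk : (j : ℕ) ≠ k := fun hc => h (Fin.ext hc)
        rw [Function.update_of_ne h]
        simp only [hr]
        by_cases h' : (j : ℕ) < k
        · simp [h', show (j:ℕ) < k + 1 by omega]
        · simp [h', show ¬ (j:ℕ) < k + 1 by omega]
    rw [hupd, ih (k+1) (by omega)]
    push_cast
    ring

end helpers


/-- On the instance with `n` knapsacks of capacity `W ≥ 2`, `n` items of
(cost, weight) = (2, 1) and `n` items of (cost, weight) = (W, W), the optimum
achieves total profit `n * W` (one (W,W)-item per knapsack), while the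
greedy-by-ratio solution, which places the (2,1)-items first, achieves
total profit `2 * n`. -/
theorem stmt2 (n : ℕ) (hn : 0 < n) (W : ℝ) (hW : 2 ≤ W) :
    let items := List.replicate n ((2 : ℝ), (1 : ℝ)) ++ List.replicate n (W, W)
    let cap : Fin n → ℝ := fun _ => W
    (∃ a : Fin items.length → Option (Fin n),
      FeasibleAssign cap items a ∧ assignProfit items a = n * W) ∧
    greedyProfit items cap = 2 * n := by
  intro items cap
  have hlen : items.length = n + n := by simp [items]
  have hbound : ∀ i : Fin items.length, (i : ℕ) - n < n := by
    intro i; have := i.isLt; omega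
  constructor
  · set a : Fin items.length → Option (Fin n) :=
      fun i => if h : n ≤ (i : ℕ) then some ⟨(i : ℕ) - n, hbound i⟩ else none with ha
    have hget : ∀ (i : Fin items.length), n ≤ (i : ℕ) → items.get i = (W, W) := by
      intro i hi
      rw [List.get_eq_getElem]
      simp only [items]
      rw [List.getElem_append_right (by simpa using hi)]
      simp
    set e : Fin items.length ≃ Fin (n + n) := finCongr hlen with he
    have hcoe : ∀ i : Fin (n + n), ((e.symm i : Fin items.length) : ℕ) = (i : ℕ) := by
      intro i; simp [he]
    refine ⟨a, ?_, ?_⟩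
    · intro j
      rw [Finset.sum_filter]
      rw [Fintype.sum_equiv e _
        (fun i => if a (e.symm i) = some j then (items.get (e.symm i)).2 else 0)
        (fun x => by simp)]
      rw [Fin.sum_univ_add]
      have h1 : ∀ i : Fin n,
          (if a (e.symm (Fin.castAdd n i)) = some j
            then (items.get (e.symm (Fin.castAdd n i))).2 else 0) = 0 := by
        intro i
        have hv : ((e.symm (Fin.castAdd n i) : Fin items.length) : ℕ) = (i : ℕ) := by
          rw [hcoe, Fin.coe_castAdd]
        have : a (e.symm (Fin.castAdd n i)) = none := by
          rw [ha]; simp only [hv]; rw [dif_neg (by omega : ¬ n ≤ (i : ℕ))]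
        simp [this]
      have h2 : ∀ i : Fin n,
          (if a (e.symm (Fin.natAdd n i)) = some j
            then (items.get (e.symm (Fin.natAdd n i))).2 else 0)
          = if i = j then W else 0 := by
        intro i
        have hv : ((e.symm (Fin.natAdd n i) : Fin items.length) : ℕ) = n + (i : ℕ) := by
          rw [hcoe, Fin.coe_natAdd]
        have hA : a (e.symm (Fin.natAdd n i)) = some i := by
          rw [ha]; simp only [hv]; rw [dif_pos (by omega : n ≤ n + (i : ℕ))]
          congr 1; ext; simp only [hv]; omega
        have hG : (items.get (e.symm (Fin.natAdd n i))).2 = W := by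
          rw [hget _ (by omega : n ≤ ((e.symm (Fin.natAdd n i) : Fin items.length) : ℕ))]
        rw [hA, hG]
        by_cases h : i = j <;> simp [h]
      rw [Finset.sum_congr rfl (fun i _ => h1 i), Finset.sum_congr rfl (fun i _ => h2 i)]
      simp [cap]
    · rw [assignProfit, Finset.sum_filter]
      rw [Fintype.sum_equiv e _
        (fun i => if a (e.symm i) ≠ none then (items.get (e.symm i)).1 else 0)
        (fun x => by simp)]
      rw [Fin.sum_univ_add]
      have h1 : ∀ i : Fin n,
          (if a (e.symm (Fin.castAdd n i)) ≠ none
            then (items.get (e.symm (Fin.castAdd n i))).1 else 0) = 0 := by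
        intro i
        have hv : ((e.symm (Fin.castAdd n i) : Fin items.length) : ℕ) = (i : ℕ) := by
          rw [hcoe, Fin.coe_castAdd]
        have : a (e.symm (Fin.castAdd n i)) = none := by
          rw [ha]; simp only [hv]; rw [dif_neg (by omega : ¬ n ≤ (i : ℕ))]
        simp [this]
      have h2 : ∀ i : Fin n,
          (if a (e.symm (Fin.natAdd n i)) ≠ none
            then (items.get (e.symm (Fin.natAdd n i))).1 else 0) = W := by
        intro i
        have hv : ((e.symm (Fin.natAdd n i) : Fin items.length) : ℕ) = n + (i : ℕ) := by
          rw [hcoe, Fin.coe_natAdd]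
        have hA : a (e.symm (Fin.natAdd n i)) = some ⟨(i:ℕ), i.isLt⟩ := by
          rw [ha]; simp only [hv]; rw [dif_pos (by omega : n ≤ n + (i : ℕ))]
          congr 1; ext; simp only [hv]; omega
        have hG : (items.get (e.symm (Fin.natAdd n i))).1 = W := by
          rw [hget _ (by omega : n ≤ ((e.symm (Fin.natAdd n i) : Fin items.length) : ℕ))]
        rw [hG, hA]
        simp
      rw [Finset.sum_congr rfl (fun i _ => h1 i), Finset.sum_congr rfl (fun i _ => h2 i)]
      simp [mul_comm]
  · have hcap : cap = fun j : Fin n => if (j : ℕ) < 0 then W - 1 else W := by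
      funext j; simp [cap]
    rw [hcap]
    exact greedy_light n W hW n 0 (by omega)
end

section
/- For the multiple knapsack problem with n knapsacks, the modified greedy algorithm—take for the whole system the better of the greedy-by-ratio assignment and the single most profitable unassigned item that fits in some knapsack—achieves total profit at least 1/(n+1) times the optimum. -/
section AuxForStmt4

variable {n : ℕ}

/-- Residual capacities after the greedy pass. -/
noncomputable def resAfter : List (ℝ × ℝ) → (Fin n → ℝ) → (Fin n → ℝ)
  | [], r => r
  | (_, w) :: rest, r =>
    match pick r w with
    | none => resAfter rest r
    | some j => resAfter rest (Function.update r j (r j - w))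

/-- Sum of `φ` over the items assigned by greedy. -/
noncomputable def sumAssign (φ : ℝ × ℝ → ℝ) : List (ℝ × ℝ) → (Fin n → ℝ) → ℝ
  | [], _ => 0
  | p :: rest, r =>
    match pick r p.2 with
    | none => sumAssign φ rest r
    | some j => φ p + sumAssign φ rest (Function.update r j (r j - p.2))

theorem length_greedyAssign (l : List (ℝ × ℝ)) (r : Fin n → ℝ) :
    (greedyAssign l r : List (Option (Fin n))).length = l.length := by
  induction l generalizing r with
  | nil => simp [greedyAssign]
  | cons p rest ih =>
    obtain ⟨c, w⟩ := p
    cases h : pick r w <;> simp [greedyAssign, h, ih]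

theorem greedyAssign_append (l₁ l₂ : List (ℝ × ℝ)) (r : Fin n → ℝ) :
    greedyAssign (l₁ ++ l₂) r = greedyAssign l₁ r ++ greedyAssign l₂ (resAfter l₁ r) := by
  induction l₁ generalizing r with
  | nil => simp [greedyAssign, resAfter]
  | cons p rest ih =>
    obtain ⟨c, w⟩ := p
    cases h : pick r w <;> simp [greedyAssign, resAfter, h, ih]

theorem greedyAssign_cons (p : ℝ × ℝ) (l : List (ℝ × ℝ)) (r : Fin n → ℝ) :
    greedyAssign (p :: l) r = match pick r p.2 with
      | none => none :: greedyAssign l r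
      | some j => some j :: greedyAssign l (Function.update r j (r j - p.2)) := rfl

theorem greedyProfit_append (l₁ l₂ : List (ℝ × ℝ)) (r : Fin n → ℝ) :
    greedyProfit (l₁ ++ l₂) r = greedyProfit l₁ r + greedyProfit l₂ (resAfter l₁ r) := by
  induction l₁ generalizing r with
  | nil => simp [greedyProfit, resAfter]
  | cons p rest ih =>
    obtain ⟨c, w⟩ := p
    cases h : pick r w <;> simp [greedyProfit, resAfter, h, ih] <;> ring


theorem greedyProfit_nonneg (l : List (ℝ × ℝ)) (r : Fin n → ℝ)
    (h : ∀ p ∈ l, 0 ≤ p.1) : 0 ≤ greedyProfit l r := by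
  induction l generalizing r with
  | nil => simp [greedyProfit]
  | cons p rest ih =>
    obtain ⟨c, w⟩ := p
    have hc : (0:ℝ) ≤ c := h (c, w) (by simp)
    have hr : ∀ r' : Fin n → ℝ, 0 ≤ greedyProfit rest r' :=
      fun r' => ih r' (fun q hq => h q (List.mem_cons_of_mem _ hq))
    cases hp : pick r w with
    | none => simpa [greedyProfit, hp] using hr r
    | some j =>
      have h2 := hr (Function.update r j (r j - w))
      simp only [greedyProfit, hp]
      linarith

theorem sumAssign_fst (l : List (ℝ × ℝ)) (r : Fin n → ℝ) :
    sumAssign Prod.fst l r = greedyProfit l r := by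
  induction l generalizing r with
  | nil => simp [sumAssign, greedyProfit]
  | cons p rest ih =>
    obtain ⟨c, w⟩ := p
    cases h : pick r w <;> simp [sumAssign, greedyProfit, h, ih]

theorem sumAssign_nonneg (φ : ℝ × ℝ → ℝ) (l : List (ℝ × ℝ)) (r : Fin n → ℝ)
    (h : ∀ p ∈ l, 0 ≤ φ p) : 0 ≤ sumAssign φ l r := by
  induction l generalizing r with
  | nil => simp [sumAssign]
  | cons p rest ih =>
    have hc : (0:ℝ) ≤ φ p := h p (by simp)
    have hr : ∀ r' : Fin n → ℝ, 0 ≤ sumAssign φ rest r' :=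
      fun r' => ih r' (fun q hq => h q (List.mem_cons_of_mem _ hq))
    cases hp : pick r p.2 with
    | none => simpa [sumAssign, hp] using hr r
    | some j =>
      have h2 := hr (Function.update r j (r j - p.2))
      simp only [sumAssign, hp]
      linarith

theorem sumAssign_sub (φ ψ : ℝ × ℝ → ℝ) (l : List (ℝ × ℝ)) (r : Fin n → ℝ) :
    sumAssign (fun p => φ p - ψ p) l r = sumAssign φ l r - sumAssign ψ l r := by
  induction l generalizing r with
  | nil => simp [sumAssign]
  | cons p rest ih =>
    cases hp : pick r p.2 with
    | none => simp only [sumAssign, hp, ih]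
    | some j => simp only [sumAssign, hp, ih]; ring

theorem sumAssign_smul (ρ : ℝ) (ψ : ℝ × ℝ → ℝ) (l : List (ℝ × ℝ)) (r : Fin n → ℝ) :
    sumAssign (fun p => ρ * ψ p) l r = ρ * sumAssign ψ l r := by
  induction l generalizing r with
  | nil => simp [sumAssign]
  | cons p rest ih =>
    cases hp : pick r p.2 with
    | none => simp only [sumAssign, hp, ih]
    | some j => simp only [sumAssign, hp, ih]; ring

theorem sum_resAfter (l : List (ℝ × ℝ)) (r : Fin n → ℝ) :
    ∑ j, resAfter l r j = ∑ j, r j - sumAssign Prod.snd l r := by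
  induction l generalizing r with
  | nil => simp [resAfter, sumAssign]
  | cons p rest ih =>
    cases hp : pick r p.2 with
    | none => simp only [resAfter, sumAssign, hp, ih]
    | some j =>
      simp only [resAfter, sumAssign, hp, ih]
      have e : ∑ j', Function.update r j (r j - p.2) j' = (∑ j', r j') - p.2 := by
        rw [Finset.sum_update_of_mem (Finset.mem_univ j), Finset.sdiff_singleton_eq_erase,
          ← Finset.add_sum_erase Finset.univ r (Finset.mem_univ j)]
        ring
      rw [e]; ring

theorem sumAssign_eq (φ : ℝ × ℝ → ℝ) (l : List (ℝ × ℝ)) (r : Fin n → ℝ) :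
    sumAssign φ l r = ∑ k ∈ Finset.range l.length,
      if (greedyAssign l r : List (Option (Fin n))).getD k none ≠ none
        then φ (l.getD k (0, 0)) else 0 := by
  induction l generalizing r with
  | nil => simp [sumAssign, greedyAssign]
  | cons p rest ih =>
    obtain ⟨cc, ww⟩ := p
    cases hp : pick r ww with
    | none =>
      simp only [sumAssign, greedyAssign, hp, List.length_cons, Finset.sum_range_succ']
      simp [ih, List.getD_cons_succ, List.getD_cons_zero]
    | some j =>
      simp only [sumAssign, greedyAssign, hp, List.length_cons, Finset.sum_range_succ']
      simp [ih, List.getD_cons_succ, List.getD_cons_zero]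
      ring

theorem pick_eq_none_iff {r : Fin n → ℝ} {w : ℝ} (hn : 0 < n) (h : pick r w = none)
    (j : Fin n) : r j < w := by
  by_contra hc
  push_neg at hc
  obtain ⟨j0, -, hj0⟩ := Finset.exists_max_image Finset.univ r ⟨j, Finset.mem_univ j⟩
  rw [pick, List.find?_eq_none] at h
  refine absurd (h j0 (List.mem_finRange j0)) ?_
  simp only [decide_eq_true_eq, not_not]
  exact ⟨le_trans hc (hj0 j (Finset.mem_univ j)), fun j' _ => hj0 j' (Finset.mem_univ j')⟩

theorem sumAssign_take (φ : ℝ × ℝ → ℝ) (l : List (ℝ × ℝ)) (r : Fin n → ℝ) (t : ℕ)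
    (ht : t ≤ l.length) :
    sumAssign φ (l.take t) r = ∑ k ∈ Finset.range l.length,
      if k < t ∧ (greedyAssign l r : List (Option (Fin n))).getD k none ≠ none
        then φ (l.getD k (0, 0)) else 0 := by
  have hsplit : greedyAssign l r
      = greedyAssign (l.take t) r ++ greedyAssign (l.drop t) (resAfter (l.take t) r) := by
    conv_lhs => rw [← List.take_append_drop t l]
    rw [greedyAssign_append]
  have hlen : (greedyAssign (l.take t) r : List (Option (Fin n))).length = t := by
    rw [length_greedyAssign, List.length_take, min_eq_left ht]
  rw [sumAssign_eq, List.length_take, min_eq_left ht,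
    show l.length = t + (l.length - t) by omega, Finset.sum_range_add]
  have h2 : ∀ k ∈ Finset.range (l.length - t),
      (if t + k < t ∧ (greedyAssign l r : List (Option (Fin n))).getD (t+k) none ≠ none
        then φ (l.getD (t+k) (0, 0)) else 0) = 0 := by
    intro k _
    exact if_neg (by rintro ⟨h1, -⟩; omega)
  rw [Finset.sum_congr rfl h2, Finset.sum_const_zero, add_zero]
  refine Finset.sum_congr rfl fun k hk => ?_
  rw [Finset.mem_range] at hk
  have e1 : (greedyAssign l r : List (Option (Fin n))).getD k none
      = (greedyAssign (l.take t) r : List (Option (Fin n))).getD k none := by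
    rw [hsplit]
    simp [List.getD_eq_getElem?_getD, List.getElem?_append_left (hlen ▸ hk : k < _)]
  have e2 : (l.take t).getD k (0,0) = l.getD k (0,0) := by
    simp [List.getD_eq_getElem?_getD, List.getElem?_take, hk]
  rw [← e1, e2]
  simp [hk]

end AuxForStmt4



/-- Multiple knapsack with `n` knapsacks: the modified greedy algorithm —
the better of the greedy-by-ratio assignment and the single most profitable
item left unassigned by greedy that fits in some knapsack — achieves at
least `1 / (n + 1)` of the optimum total profit. -/
theorem stmt4 (n : ℕ) (hn : 0 < n) (W : Fin n → ℝ) (hWpos : ∀ j, 0 ≤ W j)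
    (items : List (ℝ × ℝ))
    (hpos : ∀ p ∈ items, 0 < p.1 ∧ 0 < p.2)
    (hsorted : SortedByRatio items)
    (opt : ℝ)
    (hopt : IsGreatest {v : ℝ | ∃ a : Fin items.length → Option (Fin n),
        FeasibleAssign W items a ∧ assignProfit items a = v} opt)
    (best : ℝ)
    (hbest : best = sSup {v : ℝ | ∃ i : Fin items.length,
        (greedyAssign items W).getD i.val none = none ∧
        (∃ j : Fin n, (items.get i).2 ≤ W j) ∧ (items.get i).1 = v}) :
    opt / (n + 1) ≤ max (greedyProfit items W) best := by
  classical
  obtain ⟨⟨a, ha, hav⟩, hub⟩ := hopt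
  set c : Fin items.length → ℝ := fun i => (items.get i).1 with hcdef
  set w : Fin items.length → ℝ := fun i => (items.get i).2 with hwdef
  set g : ℕ → Option (Fin n) := fun k =>
    (greedyAssign items W : List (Option (Fin n))).getD k none with hgdef
  have hopt0 : 0 ≤ opt := by
    refine hub ⟨fun _ => none, fun j => ?_, ?_⟩
    · simpa [FeasibleAssign] using hWpos j
    · simp [assignProfit]
  rw [SortedByRatio, List.pairwise_iff_get] at hsorted
  have hposc : ∀ i : Fin items.length, 0 < c i := fun i => (hpos _ (List.get_mem items i)).1
  have hposw : ∀ i : Fin items.length, 0 < w i := fun i => (hpos _ (List.get_mem items i)).2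
  have hsum_split : ∀ f : Fin items.length → ℝ,
      (∑ i, if a i ≠ none then f i else 0)
        = (∑ i, if a i ≠ none ∧ g i.val ≠ none then f i else 0)
          + (∑ i, if a i ≠ none ∧ g i.val = none then f i else 0) := by
    intro f
    rw [← Finset.sum_add_distrib]
    refine Finset.sum_congr rfl fun i _ => ?_
    by_cases h1 : a i = none <;> by_cases h2 : g i.val = none <;> simp [h1, h2]
  have hoptsum : opt = ∑ i, if a i ≠ none then c i else 0 := by
    rw [← hav, assignProfit, Finset.sum_filter]
  have hWtot : (∑ i, if a i ≠ none then w i else 0) ≤ ∑ j, W j := by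
    have h1 : ∀ i : Fin items.length, (if a i ≠ none then w i else 0)
        = ∑ j, if a i = some j then w i else 0 := by
      intro i
      cases h : a i with
      | none => simp [h]
      | some j0 => simp [h, Finset.sum_ite_eq]
    rw [Finset.sum_congr rfl (fun i _ => h1 i), Finset.sum_comm]
    refine Finset.sum_le_sum fun j _ => ?_
    have h2 := ha j
    rw [Finset.sum_filter] at h2
    exact h2
  have hGsum : (∑ i : Fin items.length, if g i.val ≠ none then c i else 0)
      = greedyProfit items W := by
    rw [← sumAssign_fst items W, sumAssign_eq]
    rw [← Fin.sum_univ_eq_sum_range (fun k =>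
      if (greedyAssign items W : List (Option (Fin n))).getD k none ≠ none
        then (items.getD k (0,0)).1 else 0) items.length]
    refine Finset.sum_congr rfl fun i _ => ?_
    congr 1
    rw [List.getD_eq_getElem _ _ i.isLt]
    simp [hcdef, List.get_eq_getElem]
  by_cases hT : (Finset.univ.filter
      (fun i : Fin items.length => a i ≠ none ∧ g i.val = none)).Nonempty
  case neg =>
    rw [Finset.not_nonempty_iff_eq_empty, Finset.filter_eq_empty_iff] at hT
    have hle : opt ≤ greedyProfit items W := by
      rw [hoptsum, ← hGsum]
      refine Finset.sum_le_sum fun i _ => ?_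
      by_cases h1 : a i = none
      · by_cases h2 : g i.val = none <;> simp [h1, h2, le_of_lt (hposc i)]
      · have h2 : g i.val ≠ none := fun hg => (hT (Finset.mem_univ i)) ⟨h1, hg⟩
        simp [h1, h2]
    have h1 : (1:ℝ) ≤ (n:ℝ) + 1 := by
      have : (0:ℝ) ≤ n := Nat.cast_nonneg n
      linarith
    calc opt / (n + 1) ≤ opt := div_le_self hopt0 h1
      _ ≤ greedyProfit items W := hle
      _ ≤ max (greedyProfit items W) best := le_max_left _ _
  case pos =>
    set t := (Finset.univ.filter
      (fun i : Fin items.length => a i ≠ none ∧ g i.val = none)).min' hT with htdef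
    have ht_mem := Finset.min'_mem _ hT
    rw [Finset.mem_filter] at ht_mem
    have hta : a t ≠ none := ht_mem.2.1
    have htg : g t.val = none := ht_mem.2.2
    have htmin : ∀ i : Fin items.length, a i ≠ none → g i.val = none → t ≤ i := by
      intro i h1 h2
      exact Finset.min'_le _ _ (Finset.mem_filter.mpr ⟨Finset.mem_univ i, h1, h2⟩)
    set ρ : ℝ := c t / w t with hρdef
    have hρ : 0 ≤ ρ := div_nonneg (le_of_lt (hposc t)) (le_of_lt (hposw t))
    have hρwt : ρ * w t = c t := div_mul_cancel₀ _ (ne_of_gt (hposw t))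
    -- ratio facts
    have hge : ∀ i : Fin items.length, t ≤ i → c i ≤ ρ * w i := by
      intro i hti
      rcases eq_or_lt_of_le hti with h | h
      · rw [← h, hρwt.symm]
      · have := hsorted t i h
        exact (div_le_iff₀ (hposw i)).mp this
    have hlt : ∀ i : Fin items.length, i < t → ρ * w i ≤ c i := by
      intro i hti
      have := hsorted i t hti
      exact (le_div_iff₀ (hposw i)).mp this
    -- the prefix
    set l₁ : List (ℝ × ℝ) := items.take t.val with hl₁def
    set r' : Fin n → ℝ := resAfter l₁ W with hr'def
    have htL : t.val ≤ items.length := le_of_lt t.isLt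
    have hlen1 : (greedyAssign l₁ W : List (Option (Fin n))).length = t.val := by
      rw [length_greedyAssign, List.length_take, min_eq_left htL]
    have hsplitA : greedyAssign items W
        = greedyAssign l₁ W ++ greedyAssign (items.drop t.val) r' := by
      conv_lhs => rw [← List.take_append_drop t.val items]
      rw [greedyAssign_append]
    -- pick fails at t
    have hpick : pick r' (w t) = none := by
      have h0 : g t.val = (greedyAssign (items.drop t.val) r' :
          List (Option (Fin n))).getD 0 none := by
        rw [hgdef]
        simp only [hsplitA]
        rw [List.getD_eq_getElem?_getD, List.getElem?_append_right (by rw [hlen1]),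
          hlen1, Nat.sub_self, ← List.getD_eq_getElem?_getD]
      have hdrop : items.drop t.val = items.get t :: items.drop (t.val + 1) := by
        rw [List.drop_eq_getElem_cons t.isLt]
        simp [List.get_eq_getElem]
      rw [hdrop] at h0
      cases hp : pick r' (w t) with
      | none => rfl
      | some j =>
        exfalso
        rw [htg] at h0
        have hp' : pick r' ((items.get t).2) = some j := hp
        rw [greedyAssign_cons, hp'] at h0
        simp at h0
    have hres : ∀ j, r' j < w t := pick_eq_none_iff hn hpick
    set cP := sumAssign Prod.fst l₁ W with hcP
    set wP := sumAssign Prod.snd l₁ W with hwP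
    have hsumres : ∑ j, r' j = ∑ j, W j - wP := by rw [hr'def, sum_resAfter]
    have hresle : ∑ j, r' j ≤ (n : ℝ) * w t := by
      calc ∑ j, r' j ≤ ∑ _j : Fin n, w t := Finset.sum_le_sum fun j _ => le_of_lt (hres j)
        _ = n * w t := by
            rw [Finset.sum_const, Finset.card_univ, Fintype.card_fin, nsmul_eq_mul]
    have h2' : ∑ j, W j - wP ≤ (n : ℝ) * w t := by rw [← hsumres]; exact hresle
    have hcPG : cP ≤ greedyProfit items W := by
      have hsplitP : greedyProfit items W
          = greedyProfit l₁ W + greedyProfit (items.drop t.val) r' := by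
        conv_lhs => rw [← List.take_append_drop t.val items]
        rw [greedyProfit_append, ← hr'def]
      have hnn : 0 ≤ greedyProfit (items.drop t.val) r' :=
        greedyProfit_nonneg _ _ (fun p hp' => le_of_lt (hpos p (List.mem_of_mem_drop hp')).1)
      rw [hcP, sumAssign_fst]
      linarith
    obtain ⟨j0, hj0⟩ := Option.ne_none_iff_exists'.mp hta
    have hfit : w t ≤ W j0 := by
      have h1 := ha j0
      have h2 : t ∈ Finset.univ.filter (fun i => a i = some j0) := by
        simp [hj0]
      have h3 := Finset.single_le_sum (f := fun i : Fin items.length => (items.get i).2)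
        (fun i _ => le_of_lt (hposw i)) h2
      exact le_trans h3 h1
    have hctbest : c t ≤ best := by
      rw [hbest]
      refine le_csSup ?_ ⟨t, htg, ⟨j0, hfit⟩, rfl⟩
      refine Set.Finite.bddAbove (Set.Finite.subset
        (Set.finite_range (fun i : Fin items.length => c i)) ?_)
      rintro v ⟨i, -, -, rfl⟩
      exact ⟨i, rfl⟩
    have hB : (∑ i, if a i ≠ none ∧ g i.val = none then c i else 0)
        ≤ ρ * ∑ i, if a i ≠ none ∧ g i.val = none then w i else 0 := by
      rw [Finset.mul_sum]
      refine Finset.sum_le_sum fun i _ => ?_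
      by_cases hcond : a i ≠ none ∧ g i.val = none
      · simpa [hcond] using hge i (htmin i hcond.1 hcond.2)
      · simp [hcond]
    have hQsub : (∑ i, if a i ≠ none ∧ g i.val ≠ none then c i - ρ * w i else 0)
        ≤ cP - ρ * wP := by
      have hstep : (∑ i, if a i ≠ none ∧ g i.val ≠ none then c i - ρ * w i else 0)
          ≤ ∑ i : Fin items.length,
              if i.val < t.val ∧ g i.val ≠ none then c i - ρ * w i else 0 := by
        refine Finset.sum_le_sum fun i _ => ?_
        by_cases hcond : a i ≠ none ∧ g i.val ≠ none
        · rcases lt_or_ge i.val t.val with hlt' | hge'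
          · rw [if_pos hcond, if_pos ⟨hlt', hcond.2⟩]
          · rw [if_pos hcond, if_neg (fun hc => absurd hc.1 (Nat.not_lt.mpr hge'))]
            have := hge i (Fin.le_def.mpr hge')
            linarith
        · rw [if_neg hcond]
          by_cases hcond2 : i.val < t.val ∧ g i.val ≠ none
          · rw [if_pos hcond2]
            have := hlt i (Fin.lt_def.mpr hcond2.1)
            linarith
          · rw [if_neg hcond2]
      refine le_trans hstep ?_
      have hconv : (∑ i : Fin items.length,
            if i.val < t.val ∧ g i.val ≠ none then c i - ρ * w i else 0)
          = ∑ k ∈ Finset.range items.length,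
              if k < t.val ∧ (greedyAssign items W : List (Option (Fin n))).getD k none ≠ none
                then ((items.getD k (0,0)).1 - ρ * (items.getD k (0,0)).2) else 0 := by
        rw [← Fin.sum_univ_eq_sum_range (fun k =>
          if k < t.val ∧ (greedyAssign items W : List (Option (Fin n))).getD k none ≠ none
            then ((items.getD k (0,0)).1 - ρ * (items.getD k (0,0)).2) else 0) items.length]
        refine Finset.sum_congr rfl fun i _ => ?_
        have hgd : items.getD i.val (0,0) = items.get i := by
          rw [List.getD_eq_getElem _ _ i.isLt]
          simp [List.get_eq_getElem]
        simp [hgd, hgdef, hcdef, hwdef]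
      have hlin : sumAssign (fun p : ℝ × ℝ => p.1 - ρ * p.2) l₁ W = cP - ρ * wP := by
        have h1 := sumAssign_sub (n := n) Prod.fst (fun p => ρ * Prod.snd p) l₁ W
        have h2 := sumAssign_smul (n := n) ρ Prod.snd l₁ W
        rw [hcP, hwP, ← h2, ← h1]
      rw [hconv, ← sumAssign_take (fun p : ℝ × ℝ => p.1 - ρ * p.2) items W t.val htL, hlin]
    have hQ : (∑ i, if a i ≠ none ∧ g i.val ≠ none then c i else 0)
        - ρ * (∑ i, if a i ≠ none ∧ g i.val ≠ none then w i else 0) ≤ cP - ρ * wP := by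
      refine le_trans (le_of_eq ?_) hQsub
      rw [Finset.mul_sum, ← Finset.sum_sub_distrib]
      refine Finset.sum_congr rfl fun i _ => ?_
      by_cases hcond : a i ≠ none ∧ g i.val ≠ none <;> simp [hcond]
    have hoptQB := hoptsum.trans (hsum_split c)
    have hwQB := hsum_split w
    have hGM : greedyProfit items W ≤ max (greedyProfit items W) best := le_max_left _ _
    have hbM : best ≤ max (greedyProfit items W) best := le_max_right _ _
    have hn0 : (0:ℝ) ≤ n := Nat.cast_nonneg n
    rw [div_le_iff₀ (by positivity)]
    nlinarith [mul_le_mul_of_nonneg_left hWtot hρ, mul_le_mul_of_nonneg_left h2' hρ,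
      mul_le_mul_of_nonneg_left hctbest hn0, hB, hQ, hoptQB, hwQB, hcPG, hρwt, hGM, hbM]
end

section
/- For the multiple knapsack problem with n knapsacks, the optimum total profit is at most the greedy-by-ratio total profit plus n times the maximum profit of a single unassigned item that fits in some knapsack; consequently max(greedy, best single item) ≥ OPT/(n+1). -/
lemma pick_none_iff {n : ℕ} (hn : 0 < n) (r : Fin n → ℝ) (w : ℝ) :
    pick r w = none ↔ ∀ j, r j < w := by
  rw [pick, List.find?_eq_none]
  constructor
  · intro h j
    by_contra hc
    push_neg at hc
    obtain ⟨j0, hj0, hmax⟩ := Finset.exists_max_image Finset.univ r ⟨j, Finset.mem_univ j⟩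
    exact h j0 (List.mem_finRange j0)
      (by simp only [decide_eq_true_iff]
          exact ⟨le_trans hc (hmax j (Finset.mem_univ j)), fun j' _ => hmax j' (Finset.mem_univ j')⟩)
  · intro h j _
    simp only [decide_eq_true_iff, not_and]
    intro hw
    exact absurd hw (not_le.2 (h j))

lemma pick_some_le {n : ℕ} {r : Fin n → ℝ} {w : ℝ} {j : Fin n} (h : pick r w = some j) :
    w ≤ r j := by
  have := List.find?_some h
  simp only [decide_eq_true_iff] at this
  exact this.1

lemma greedyProfit_eq {n : ℕ} (items : List (ℝ × ℝ)) : ∀ r : Fin n → ℝ,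
    greedyProfit items r = ∑ k : Fin items.length,
      if (greedyAssign items r).getD k.val none ≠ none then (items.get k).1 else 0 := by
  induction items with
  | nil => intro r; simp [greedyProfit]
  | cons p rest ih =>
    obtain ⟨c, w⟩ := p
    intro r
    cases hpk : pick r w with
    | none =>
      simp only [greedyProfit, greedyAssign, hpk, Fin.sum_univ_succ, List.getD_cons_zero,
        List.getD_cons_succ, Fin.val_succ, List.length_cons, List.get_cons_succ]
      simp [ih r]
    | some j =>
      simp only [greedyProfit, greedyAssign, hpk, Fin.sum_univ_succ, List.getD_cons_zero,
        List.getD_cons_succ, Fin.val_succ, List.length_cons, List.get_cons_succ]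
      simp [ih (Function.update r j (r j - w))]

lemma greedy_dichotomy {n : ℕ} (hn : 0 < n) (W : Fin n → ℝ) :
    ∀ (items : List (ℝ × ℝ)) (r : Fin n → ℝ),
    (∀ p ∈ items, 0 < p.1 ∧ 0 < p.2) →
    (∀ j, 0 ≤ r j) → (∀ j, r j ≤ W j) →
    (∀ i : Fin items.length, (∃ j, (items.get i).2 ≤ W j) →
        (greedyAssign items r).getD i.val none ≠ none)
    ∨ ∃ i : Fin items.length,
        (greedyAssign items r).getD i.val none = none ∧
        (∃ j, (items.get i).2 ≤ W j) ∧
        (∀ k : Fin items.length, k < i →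
          (greedyAssign items r).getD k.val none = none → ¬∃ j, (items.get k).2 ≤ W j) ∧
        (∑ j, r j) - (∑ k : Fin items.length,
            if k < i ∧ (greedyAssign items r).getD k.val none ≠ none
            then (items.get k).2 else 0) < n * (items.get i).2 := by
  intro items
  induction items with
  | nil => intro r _ _ _; left; intro i; exact i.elim0
  | cons p rest ih =>
    obtain ⟨c, w⟩ := p
    intro r hpos h0 hW
    have hw : 0 < w := (hpos (c, w) List.mem_cons_self).2
    have hposr : ∀ p ∈ rest, 0 < p.1 ∧ 0 < p.2 :=
      fun p hp => hpos p (List.mem_cons_of_mem _ hp)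
    cases hpk : pick r w with
    | none =>
      have hlt : ∀ j, r j < w := (pick_none_iff hn r w).1 hpk
      by_cases hfit : ∃ j, w ≤ W j
      · right
        refine ⟨⟨0, Nat.succ_pos _⟩, ?_, ?_, ?_, ?_⟩
        · simp [greedyAssign, hpk]
        · exact hfit
        · intro k hk; exact absurd hk (by simp [Fin.lt_def])
        · have hB : (∑ k : Fin ((c, w) :: rest).length,
              if k < (⟨0, Nat.succ_pos _⟩ : Fin ((c, w) :: rest).length) ∧
                (greedyAssign ((c, w) :: rest) r).getD k.val none ≠ none
              then (((c, w) :: rest).get k).2 else 0) = 0 := by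
            apply Finset.sum_eq_zero
            intro k _
            simp [Fin.lt_def]
          rw [hB]
          have : (∑ j, r j) < ∑ _j : Fin n, w :=
            Finset.sum_lt_sum_of_nonempty (Finset.univ_nonempty_iff.2 ⟨⟨0, hn⟩⟩)
              (fun j _ => hlt j)
          simpa using this
      · rcases ih r hposr h0 hW with hA | ⟨i, h1, h2, h3, h4⟩
        · left
          intro i hfi
          rcases i with ⟨iv, hi⟩
          cases iv with
          | zero => exact absurd hfi hfit
          | succ k =>
            have := hA ⟨k, Nat.lt_of_succ_lt_succ hi⟩ hfi
            simpa [greedyAssign, hpk] using this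
        · right
          refine ⟨i.succ, ?_, ?_, ?_, ?_⟩
          · simpa [greedyAssign, hpk] using h1
          · exact h2
          · intro k hk hkn
            rcases k with ⟨kv, hkv⟩
            cases kv with
            | zero => intro hc; exact hfit hc
            | succ k' =>
              have hlt' : (⟨k', Nat.lt_of_succ_lt_succ hkv⟩ : Fin rest.length) < i := by
                simpa [Fin.lt_def] using hk
              refine h3 ⟨k', Nat.lt_of_succ_lt_succ hkv⟩ hlt' ?_
              simpa [greedyAssign, hpk] using hkn
          · have hsum : (∑ k : Fin ((c, w) :: rest).length,
                if k < i.succ ∧ (greedyAssign ((c, w) :: rest) r).getD k.val none ≠ none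
                then (((c, w) :: rest).get k).2 else 0)
              = ∑ k : Fin rest.length,
                if k < i ∧ (greedyAssign rest r).getD k.val none ≠ none
                then (rest.get k).2 else 0 := by
              simp only [List.length_cons]
              rw [Fin.sum_univ_succ]
              simp [greedyAssign, hpk, Fin.succ_lt_succ_iff]
            rw [hsum]
            have hg : (((c, w) :: rest).get i.succ).2 = (rest.get i).2 := rfl
            rw [hg]
            exact h4
    | some j =>
      have hwr : w ≤ r j := pick_some_le hpk
      set r' := Function.update r j (r j - w) with hr'
      have h0' : ∀ j', 0 ≤ r' j' := by
        intro j'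
        rcases eq_or_ne j' j with rfl | hne
        · simp [hr', sub_nonneg.2 hwr]
        · simp [hr', Function.update_of_ne hne, h0 j']
      have hW' : ∀ j', r' j' ≤ W j' := by
        intro j'
        rcases eq_or_ne j' j with rfl | hne
        · simp only [hr', Function.update_self]
          linarith [hW j']
        · simp [hr', Function.update_of_ne hne, hW j']
      have hsum' : (∑ j', r' j') = (∑ j', r j') - w := by
        rw [hr', Finset.sum_update_of_mem (Finset.mem_univ j),
          Finset.sdiff_singleton_eq_erase]
        have h := Finset.add_sum_erase Finset.univ r (Finset.mem_univ j)
        linarith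
      rcases ih r' hposr h0' hW' with hA | ⟨i, h1, h2, h3, h4⟩
      · left
        intro i hfi
        rcases i with ⟨iv, hi⟩
        cases iv with
        | zero => simp [greedyAssign, hpk]
        | succ k =>
          have := hA ⟨k, Nat.lt_of_succ_lt_succ hi⟩ hfi
          simpa [greedyAssign, hpk] using this
      · right
        refine ⟨i.succ, ?_, ?_, ?_, ?_⟩
        · simpa [greedyAssign, hpk] using h1
        · exact h2
        · intro k hk hkn
          rcases k with ⟨kv, hkv⟩
          cases kv with
          | zero => simp [greedyAssign, hpk] at hkn
          | succ k' =>
            have hlt' : (⟨k', Nat.lt_of_succ_lt_succ hkv⟩ : Fin rest.length) < i := by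
              simpa [Fin.lt_def] using hk
            refine h3 ⟨k', Nat.lt_of_succ_lt_succ hkv⟩ hlt' ?_
            simpa [greedyAssign, hpk] using hkn
        · have hsum : (∑ k : Fin ((c, w) :: rest).length,
              if k < i.succ ∧ (greedyAssign ((c, w) :: rest) r).getD k.val none ≠ none
              then (((c, w) :: rest).get k).2 else 0)
            = w + ∑ k : Fin rest.length,
              if k < i ∧ (greedyAssign rest r').getD k.val none ≠ none
              then (rest.get k).2 else 0 := by
            simp only [List.length_cons]
            rw [Fin.sum_univ_succ]
            simp [greedyAssign, hpk, Fin.succ_lt_succ_iff, Fin.succ_pos, hr']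
          rw [hsum]
          have hg : (((c, w) :: rest).get i.succ).2 = (rest.get i).2 := rfl
          rw [hg]
          have h4' := h4
          rw [hsum'] at h4'
          linarith

lemma if_split_of_imp {m : ℕ} (P Q : Fin m → Prop) [DecidablePred P] [DecidablePred Q]
    (h : ∀ k, P k → Q k) (f : Fin m → ℝ) :
    ∑ k, (if Q k then f k else 0)
      = ∑ k, (if P k then f k else 0) + ∑ k, (if Q k ∧ ¬ P k then f k else 0) := by
  rw [← Finset.sum_add_distrib]
  apply Finset.sum_congr rfl
  intro k _
  by_cases hP : P k
  · simp [hP, h k hP]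
  · by_cases hQ : Q k <;> simp [hP, hQ]

/-- Multiple knapsack with `n` knapsacks: the optimum total profit is at most
the greedy-by-ratio total profit plus `n` times the largest profit of a
single greedy-unassigned item fitting in some knapsack; consequently the
better of the greedy profit and that single item achieves at least
`OPT / (n + 1)`. -/
theorem stmt14 (n : ℕ) (hn : 0 < n) (W : Fin n → ℝ) (hWpos : ∀ j, 0 ≤ W j)
    (items : List (ℝ × ℝ))
    (hpos : ∀ p ∈ items, 0 < p.1 ∧ 0 < p.2)
    (hsorted : SortedByRatio items)
    (opt : ℝ)
    (hopt : IsGreatest {v : ℝ | ∃ a : Fin items.length → Option (Fin n),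
        FeasibleAssign W items a ∧ assignProfit items a = v} opt)
    (best : ℝ)
    (hbest : best = sSup {v : ℝ | ∃ i : Fin items.length,
        (greedyAssign items W).getD i.val none = none ∧
        (∃ j : Fin n, (items.get i).2 ≤ W j) ∧ (items.get i).1 = v}) :
    opt ≤ greedyProfit items W + n * best ∧
    opt / (n + 1) ≤ max (greedyProfit items W) best := by
  classical
  set V := {v : ℝ | ∃ i : Fin items.length,
        (greedyAssign items W).getD i.val none = none ∧
        (∃ j : Fin n, (items.get i).2 ≤ W j) ∧ (items.get i).1 = v} with hVdef
  have hcw : ∀ k : Fin items.length, 0 < (items.get k).1 ∧ 0 < (items.get k).2 :=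
    fun k => hpos _ (items.get_mem k)
  have hVbdd : BddAbove V := by
    apply Set.Finite.bddAbove
    apply (Set.finite_range (fun i : Fin items.length => (items.get i).1)).subset
    rintro v ⟨i, _, _, hv⟩
    exact ⟨i, hv⟩
  have hbest0 : 0 ≤ best := by
    rcases Set.eq_empty_or_nonempty V with hV | ⟨v, hv⟩
    · rw [hbest, hV, Real.sSup_empty]
    · obtain ⟨i, hh1, hh2, hh3⟩ := hv
      have hvV : (items.get i).1 ∈ V := ⟨i, hh1, hh2, rfl⟩
      have hle := le_csSup hVbdd hvV
      rw [← hbest] at hle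
      exact le_trans (le_of_lt (hcw i).1) hle
  have hg0 : 0 ≤ greedyProfit items W := by
    rw [greedyProfit_eq]
    apply Finset.sum_nonneg
    intro k _
    by_cases h : (greedyAssign items W).getD k.val none ≠ none
    · rw [if_pos h]; exact le_of_lt (hcw k).1
    · rw [if_neg h]
  have key : ∀ a : Fin items.length → Option (Fin n), FeasibleAssign W items a →
      assignProfit items a ≤ greedyProfit items W + n * best := by
    intro a ha
    have hfits : ∀ k : Fin items.length, a k ≠ none → ∃ j, (items.get k).2 ≤ W j := by
      intro k hk
      cases h : a k with
      | none => exact absurd h hk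
      | some j =>
        refine ⟨j, le_trans ?_ (ha j)⟩
        exact Finset.single_le_sum (fun i _ => le_of_lt (hcw i).2)
          (Finset.mem_filter.2 ⟨Finset.mem_univ _, h⟩)
    have hSw : ∑ k, (if a k ≠ none then (items.get k).2 else 0) ≤ ∑ j, W j := by
      have hper : ∀ k : Fin items.length, (if a k ≠ none then (items.get k).2 else 0)
          = ∑ j, if a k = some j then (items.get k).2 else 0 := by
        intro k
        cases h : a k with
        | none => simp [h]
        | some j0 => simp [h]
      rw [Finset.sum_congr rfl (fun k _ => hper k), Finset.sum_comm]
      apply Finset.sum_le_sum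
      intro j _
      have h := ha j
      rw [Finset.sum_filter] at h
      exact h
    rw [assignProfit, Finset.sum_filter]
    rcases greedy_dichotomy hn W items W hpos hWpos (fun j => le_refl _) with hA | ⟨i, h1, h2, h3, hB⟩
    · have hle : ∑ k, (if a k ≠ none then (items.get k).1 else 0) ≤ greedyProfit items W := by
        rw [greedyProfit_eq]
        apply Finset.sum_le_sum
        intro k _
        by_cases h : a k ≠ none
        · rw [if_pos h, if_pos (hA k (hfits k h))]
        · rw [if_neg h]
          by_cases h' : (greedyAssign items W).getD k.val none ≠ none
          · rw [if_pos h']; exact le_of_lt (hcw k).1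
          · rw [if_neg h']
      have : 0 ≤ (n : ℝ) * best := mul_nonneg (Nat.cast_nonneg n) hbest0
      linarith
    · -- i is the first skipped fitting item
      set ρ := (items.get i).1 / (items.get i).2 with hρ
      clear_value ρ
      have hwi : 0 < (items.get i).2 := (hcw i).2
      have hρ0 : 0 ≤ ρ := by
        rw [hρ]
        exact div_nonneg (le_of_lt (hcw i).1) (le_of_lt hwi)
      have hρw : ρ * (items.get i).2 = (items.get i).1 := by
        rw [hρ]
        exact div_mul_cancel₀ _ (ne_of_gt hwi)
      unfold SortedByRatio at hsorted
      have hpair := List.pairwise_iff_get.1 hsorted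
      have hratioGe : ∀ k : Fin items.length, i ≤ k →
          (items.get k).1 ≤ ρ * (items.get k).2 := by
        intro k hik
        rcases eq_or_lt_of_le hik with rfl | hlt
        · rw [hρw]
        · have h := hpair i k hlt
          rw [hρ]
          exact (div_le_iff₀ (hcw k).2).1 h
      have hratioLe : ∀ k : Fin items.length, k < i →
          ρ * (items.get k).2 ≤ (items.get k).1 := by
        intro k hki
        have h := hpair k i hki
        rw [hρ]
        exact (le_div_iff₀ (hcw k).2).1 h
      -- predicates
      set Pa : Fin items.length → Prop := fun k => a k ≠ none with hPa
      set QT : Fin items.length → Prop :=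
        fun k => k < i ∧ (greedyAssign items W).getD k.val none ≠ none with hQT
      set Qa : Fin items.length → Prop := fun k => Pa k ∧ k < i with hQa
      have hQaQT : ∀ k, Qa k → QT k := by
        rintro k ⟨hak, hki⟩
        refine ⟨hki, ?_⟩
        by_contra hnone
        exact h3 k hki hnone (hfits k hak)
      -- sums
      set S1c := ∑ k, (if Qa k then (items.get k).1 else 0) with hS1c
      set S1w := ∑ k, (if Qa k then (items.get k).2 else 0) with hS1w
      set S2c := ∑ k, (if Pa k ∧ ¬ Qa k then (items.get k).1 else 0) with hS2c
      set S2w := ∑ k, (if Pa k ∧ ¬ Qa k then (items.get k).2 else 0) with hS2w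
      set Tc := ∑ k, (if QT k then (items.get k).1 else 0) with hTc
      set Tw := ∑ k, (if QT k then (items.get k).2 else 0) with hTw
      set Dc := ∑ k, (if QT k ∧ ¬ Qa k then (items.get k).1 else 0) with hDc
      set Dw := ∑ k, (if QT k ∧ ¬ Qa k then (items.get k).2 else 0) with hDw
      set C := ∑ j, W j with hC
      clear_value S1c S1w S2c S2w Tc Tw Dc Dw C
      have hsplitc : ∑ k, (if Pa k then (items.get k).1 else 0) = S1c + S2c := by
        rw [hS1c, hS2c]
        exact if_split_of_imp Qa Pa (fun k hk => hk.1) _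
      have hsplitw : ∑ k, (if Pa k then (items.get k).2 else 0) = S1w + S2w := by
        rw [hS1w, hS2w]
        exact if_split_of_imp Qa Pa (fun k hk => hk.1) _
      have hsplitTc : Tc = S1c + Dc := by
        rw [hTc, hS1c, hDc]
        exact if_split_of_imp Qa QT hQaQT _
      have hsplitTw : Tw = S1w + Dw := by
        rw [hTw, hS1w, hDw]
        exact if_split_of_imp Qa QT hQaQT _
      have hS2 : S2c ≤ ρ * S2w := by
        rw [hS2c, hS2w, Finset.mul_sum]
        apply Finset.sum_le_sum
        intro k _
        by_cases h : Pa k ∧ ¬ Qa k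
        · rw [if_pos h, if_pos h]
          apply hratioGe
          by_contra hik
          exact h.2 ⟨h.1, lt_of_not_ge hik⟩
        · simp [h]
      have hD : ρ * Dw ≤ Dc := by
        rw [hDc, hDw, Finset.mul_sum]
        apply Finset.sum_le_sum
        intro k _
        by_cases h : QT k ∧ ¬ Qa k
        · rw [if_pos h, if_pos h]
          exact hratioLe k h.1.1
        · simp [h]
      have hwle : S1w + S2w ≤ C := by rw [← hsplitw]; exact hSw
      have hTcg : Tc ≤ greedyProfit items W := by
        rw [greedyProfit_eq, hTc]
        apply Finset.sum_le_sum
        intro k _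
        by_cases h : QT k
        · rw [if_pos h, if_pos h.2]
        · rw [if_neg h]
          by_cases h' : (greedyAssign items W).getD k.val none ≠ none
          · rw [if_pos h']; exact le_of_lt (hcw k).1
          · rw [if_neg h']
      have hBlt : C - Tw < n * (items.get i).2 := hB
      have hci_best : (items.get i).1 ≤ best := by
        rw [hbest]
        exact le_csSup hVbdd ⟨i, h1, h2, rfl⟩
      have hS2w0 : 0 ≤ S2w := by
        rw [hS2w]
        apply Finset.sum_nonneg
        intro k _
        by_cases h : Pa k ∧ ¬ Qa k
        · rw [if_pos h]; exact le_of_lt (hcw k).2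
        · rw [if_neg h]
      -- chain
      have step1 : ρ * S2w ≤ ρ * (C - S1w) :=
        mul_le_mul_of_nonneg_left (by linarith) hρ0
      have step2 : ρ * (C - Tw) ≤ ρ * ((n : ℝ) * (items.get i).2) :=
        mul_le_mul_of_nonneg_left (le_of_lt hBlt) hρ0
      have step3 : ρ * ((n : ℝ) * (items.get i).2) = (n : ℝ) * (items.get i).1 := by
        rw [← hρw]; ring
      have hnb : (n : ℝ) * (items.get i).1 ≤ (n : ℝ) * best :=
        mul_le_mul_of_nonneg_left hci_best (Nat.cast_nonneg n)
      have e1 : ρ * (C - S1w) = ρ * (C - Tw) + ρ * Dw := by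
        rw [hsplitTw]; ring
      rw [hsplitc]
      linarith [hD, hS2, step1, step2, step3, hnb, hTcg, hsplitTc, e1]
  obtain ⟨a, ha, hPa⟩ := hopt.1
  have h1 : opt ≤ greedyProfit items W + n * best := hPa ▸ key a ha
  refine ⟨h1, ?_⟩
  have hgM := le_max_left (greedyProfit items W) best
  have hbM := le_max_right (greedyProfit items W) best
  have hnbM : (n : ℝ) * best ≤ (n : ℝ) * max (greedyProfit items W) best :=
    mul_le_mul_of_nonneg_left hbM (Nat.cast_nonneg n)
  rw [div_le_iff₀ (by positivity : (0 : ℝ) < (n : ℝ) + 1)]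
  have hexp : max (greedyProfit items W) best * ((n : ℝ) + 1)
      = max (greedyProfit items W) best + (n : ℝ) * max (greedyProfit items W) best := by ring
  linarith
end
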